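/- Let (X, ‖·‖) be a real Banach space and let T : X → X be an enriched 𝒜′-contraction, i.e., there exist b ∈ [0,∞) and f ∈ 𝒜′ with ‖b(u−v) + Tu − Tv‖ ≤ f((b+1)‖u−v‖, ‖(b+1)(u−v) + v − Tv‖, ‖(b+1)(v−u) + u − Tu‖) for all u, v ∈ X with u ≠ v. Then T has a unique fixed point p ∈ X, and there exists λ ∈ (0,1] such that for every u₀ ∈ X the sequence defined by u_{n+1} = (1−λ)u_n + λT u_n (n ≥ 0) converges to p. -/

import Mathlib

/-- Membership in the class `𝒜′` of comparison functions. -/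
def MemA' (f : ℝ × ℝ × ℝ → ℝ) : Prop :=
  ContinuousOn f {p : ℝ × ℝ × ℝ | 0 ≤ p.1 ∧ 0 ≤ p.2.1 ∧ 0 ≤ p.2.2} ∧
  (∃ k : ℝ, 0 ≤ k ∧ k < 1 ∧ ∀ r s : ℝ, 0 ≤ r → 0 ≤ s →
    (r ≤ f (r, s, s) ∨ r ≤ f (s, s, r)) → r ≤ k * s) ∧
  (∀ lam : ℝ, 0 < lam → ∀ r s t : ℝ, 0 ≤ r → 0 ≤ s → 0 ≤ t →
    lam * f (r, s, t) ≤ f (lam * r, lam * s, lam * t)) ∧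
  (∀ r s t t₁ : ℝ, 0 ≤ r → 0 ≤ s → 0 ≤ t → 0 ≤ t₁ → t ≤ t₁ →
    f (r, s, t) ≤ f (r, s, t₁)) ∧
  (∃ k : ℝ, 0 ≤ k ∧ k < 1 ∧ ∀ r s : ℝ, 0 ≤ r → 0 ≤ s →
    r ≤ f (s, 0, r + s) → r ≤ k * s) ∧
  (∀ r : ℝ, 0 ≤ r → r ≤ f (r, r, r) → r = 0)

/-- An enriched `𝒜′`-contraction on a real Banach space has a unique fixed point `p`,
and there is `λ ∈ (0,1]` such that every Krasnoselskii iteration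
`u_{n+1} = (1-λ) u_n + λ T u_n` converges to `p`. -/
theorem enriched_A'_contraction_fixedPoint
    {X : Type*} [NormedAddCommGroup X] [NormedSpace ℝ X] [CompleteSpace X]
    (T : X → X) (f : ℝ × ℝ × ℝ → ℝ) (hf : MemA' f) (b : ℝ) (hb : 0 ≤ b)
    (hT : ∀ u v : X, u ≠ v →
      ‖b • (u - v) + T u - T v‖ ≤
        f ((b + 1) * ‖u - v‖, ‖(b + 1) • (u - v) + v - T v‖,
           ‖(b + 1) • (v - u) + u - T u‖)) :
    ∃ p : X, (T p = p ∧ ∀ q : X, T q = q → q = p) ∧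
      ∃ lam : ℝ, 0 < lam ∧ lam ≤ 1 ∧
        ∀ u : ℕ → X, (∀ n : ℕ, u (n + 1) = (1 - lam) • u n + lam • T (u n)) →
          Filter.Tendsto u Filter.atTop (nhds p) := by
  obtain ⟨hcont, -, h3, h4, ⟨k, hk0, hk1, h5⟩, h6⟩ := hf
  have hb1 : (0:ℝ) < b + 1 := by linarith
  set lam : ℝ := (b + 1)⁻¹ with hlam
  have hlam0 : 0 < lam := inv_pos.mpr hb1
  have hlam1 : lam ≤ 1 := by
    rw [hlam]
    rw [inv_le_one_iff₀]; right; linarith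
  set S : X → X := fun x => (1 - lam) • x + lam • T x with hSdef
  have hlb : lam * b + lam = 1 := by
    rw [hlam, ← mul_add_one, inv_mul_cancel₀ hb1.ne']
  -- key contraction-type inequality for S
  have hS : ∀ u v : X, u ≠ v →
      ‖S u - S v‖ ≤ f (‖u - v‖, ‖u - S v‖, ‖v - S u‖) := by
    intro u v huv
    have e1 : S u - S v = lam • (b • (u - v) + T u - T v) := by
      simp only [hSdef]
      match_scalars <;> (try field_simp [hlam]) <;> (try ring) <;> linarith [hlb]
    have e2 : (b + 1) • (u - v) + v - T v = (b + 1) • (u - S v) := by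
      simp only [hSdef]
      match_scalars <;> (try field_simp [hlam]) <;> (try ring) <;> linarith [hlb]
    have e3 : (b + 1) • (v - u) + u - T u = (b + 1) • (v - S u) := by
      simp only [hSdef]
      match_scalars <;> (try field_simp [hlam]) <;> (try ring) <;> linarith [hlb]
    have hn1 : ‖S u - S v‖ = lam * ‖b • (u - v) + T u - T v‖ := by
      rw [e1, norm_smul, Real.norm_eq_abs, abs_of_pos hlam0]
    have hn2 : ‖(b + 1) • (u - v) + v - T v‖ = (b + 1) * ‖u - S v‖ := by
      rw [e2, norm_smul, Real.norm_eq_abs, abs_of_pos hb1]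
    have hn3 : ‖(b + 1) • (v - u) + u - T u‖ = (b + 1) * ‖v - S u‖ := by
      rw [e3, norm_smul, Real.norm_eq_abs, abs_of_pos hb1]
    have hT' := hT u v huv
    rw [hn2, hn3] at hT'
    have step : lam * ‖b • (u - v) + T u - T v‖ ≤
        lam * f ((b + 1) * ‖u - v‖, (b + 1) * ‖u - S v‖, (b + 1) * ‖v - S u‖) :=
      mul_le_mul_of_nonneg_left hT' hlam0.le
    have step2 := h3 lam hlam0 ((b + 1) * ‖u - v‖) ((b + 1) * ‖u - S v‖)
      ((b + 1) * ‖v - S u‖)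
      (by positivity) (by positivity) (by positivity)
    have hsc : ∀ r : ℝ, lam * ((b + 1) * r) = r := by
      intro r; rw [hlam]; field_simp
    rw [hsc, hsc, hsc] at step2
    rw [hn1]
    exact le_trans step step2
  -- any Krasnoselskii iteration converges to a fixed point of T
  have key : ∀ u : ℕ → X, (∀ n : ℕ, u (n + 1) = S (u n)) →
      ∃ q : X, T q = q ∧ Filter.Tendsto u Filter.atTop (nhds q) := by
    intro u hu
    have hd : ∀ n : ℕ, ‖u (n + 2) - u (n + 1)‖ ≤ k * ‖u (n + 1) - u n‖ := by
      intro n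
      by_cases hcase : u (n + 1) = u n
      · have : u (n + 2) = u (n + 1) := by
          rw [hu (n + 1), hcase, ← hu n]
          exact hcase
        rw [this, sub_self, norm_zero]
        positivity
      · have h1 := hS (u (n + 1)) (u n) hcase
        rw [← hu n, ← hu (n + 1), sub_self, norm_zero] at h1
        have htri : ‖u n - u (n + 2)‖ ≤
            ‖u (n + 2) - u (n + 1)‖ + ‖u (n + 1) - u n‖ := by
          rw [norm_sub_rev]
          calc ‖u (n + 2) - u n‖ = ‖(u (n + 2) - u (n + 1)) + (u (n + 1) - u n)‖ := by
                abel_nf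
            _ ≤ ‖u (n + 2) - u (n + 1)‖ + ‖u (n + 1) - u n‖ := norm_add_le _ _
        have h2 := h4 (‖u (n + 1) - u n‖) 0 (‖u n - u (n + 2)‖)
          (‖u (n + 2) - u (n + 1)‖ + ‖u (n + 1) - u n‖)
          (norm_nonneg _) le_rfl (norm_nonneg _) (by positivity) htri
        exact h5 _ _ (norm_nonneg _) (norm_nonneg _) (le_trans (le_trans h1 h2) le_rfl)
    have hgeo : ∀ n : ℕ, ‖u (n + 1) - u n‖ ≤ k ^ n * ‖u 1 - u 0‖ := by
      intro n
      induction n with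
      | zero => simp
      | succ m ih =>
          calc ‖u (m + 2) - u (m + 1)‖ ≤ k * ‖u (m + 1) - u m‖ := hd m
            _ ≤ k * (k ^ m * ‖u 1 - u 0‖) := mul_le_mul_of_nonneg_left ih hk0
            _ = k ^ (m + 1) * ‖u 1 - u 0‖ := by ring
    have hcauchy : CauchySeq u := by
      apply cauchySeq_of_le_geometric k (‖u 1 - u 0‖) hk1
      intro n
      rw [dist_eq_norm, norm_sub_rev]
      calc ‖u (n + 1) - u n‖ ≤ k ^ n * ‖u 1 - u 0‖ := hgeo n
        _ = ‖u 1 - u 0‖ * k ^ n := mul_comm _ _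
    obtain ⟨q, hq⟩ := cauchySeq_tendsto_of_complete hcauchy
    have hq1 : Filter.Tendsto (fun n => u (n + 1)) Filter.atTop (nhds q) :=
      hq.comp (Filter.tendsto_add_atTop_nat 1)
    have hSq : S q = q := by
      by_cases hfreq : ∃ᶠ n in Filter.atTop, u n = q
      · obtain ⟨φ, hφmono, hφ⟩ := Filter.extraction_of_frequently_atTop hfreq
        have hd0 : Filter.Tendsto (fun n => ‖u (n + 1) - u n‖) Filter.atTop (nhds 0) := by
          simpa using (hq1.sub hq).norm
        have hsub : Filter.Tendsto (fun n => ‖u (φ n + 1) - u (φ n)‖)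
            Filter.atTop (nhds 0) := hd0.comp hφmono.tendsto_atTop
        have hconst : ∀ n, ‖u (φ n + 1) - u (φ n)‖ = ‖S q - q‖ := by
          intro n; rw [hu (φ n), hφ n]
        rw [show (fun n => ‖u (φ n + 1) - u (φ n)‖) = fun _ => ‖S q - q‖ from
          funext hconst] at hsub
        have := tendsto_nhds_unique hsub tendsto_const_nhds
        rw [← sub_eq_zero]
        exact norm_eq_zero.mp this.symm
      · have hev : ∀ᶠ n in Filter.atTop, u n ≠ q := by
          rwa [Filter.not_frequently] at hfreq
        set r : ℝ := ‖S q - q‖ with hr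
        have hle : ∀ᶠ n in Filter.atTop,
            ‖S q - u (n + 1)‖ ≤ f (‖q - u n‖, ‖q - u (n + 1)‖, ‖u n - S q‖) := by
          filter_upwards [hev] with n hn
          have := hS q (u n) (fun h => hn h.symm)
          rwa [← hu n] at this
        have t1 : Filter.Tendsto (fun n => ‖q - u n‖) Filter.atTop (nhds 0) := by
          simpa using ((tendsto_const_nhds (x := q)).sub hq).norm
        have t2 : Filter.Tendsto (fun n => ‖q - u (n + 1)‖) Filter.atTop (nhds 0) := by
          simpa using ((tendsto_const_nhds (x := q)).sub hq1).norm
        have t3 : Filter.Tendsto (fun n => ‖u n - S q‖) Filter.atTop (nhds ‖q - S q‖) := by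
          exact (hq.sub (tendsto_const_nhds (x := S q))).norm
        have tL : Filter.Tendsto (fun n => ‖S q - u (n + 1)‖) Filter.atTop (nhds r) := by
          simpa [hr] using ((tendsto_const_nhds (x := S q)).sub hq1).norm
        have hx0 : ((0:ℝ), (0:ℝ), ‖q - S q‖) ∈
            {p : ℝ × ℝ × ℝ | 0 ≤ p.1 ∧ 0 ≤ p.2.1 ∧ 0 ≤ p.2.2} :=
          ⟨le_rfl, le_rfl, norm_nonneg _⟩
        have targ : Filter.Tendsto
            (fun n => ((‖q - u n‖, ‖q - u (n + 1)‖, ‖u n - S q‖) : ℝ × ℝ × ℝ))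
            Filter.atTop
            (nhdsWithin ((0:ℝ), (0:ℝ), ‖q - S q‖)
              {p : ℝ × ℝ × ℝ | 0 ≤ p.1 ∧ 0 ≤ p.2.1 ∧ 0 ≤ p.2.2}) := by
          apply tendsto_nhdsWithin_of_tendsto_nhds_of_eventually_within
          · exact t1.prodMk_nhds (t2.prodMk_nhds t3)
          · exact Filter.Eventually.of_forall fun n =>
              ⟨norm_nonneg _, norm_nonneg _, norm_nonneg _⟩
        have tR : Filter.Tendsto
            (fun n => f (‖q - u n‖, ‖q - u (n + 1)‖, ‖u n - S q‖))
            Filter.atTop (nhds (f (0, 0, ‖q - S q‖))) :=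
          Filter.Tendsto.comp (hcont _ hx0) targ
        have hfin : r ≤ f (0, 0, ‖q - S q‖) := le_of_tendsto_of_tendsto tL tR hle
        rw [norm_sub_rev q (S q)] at hfin
        have := h5 r 0 (norm_nonneg _) le_rfl (by simpa using hfin)
        rw [mul_zero] at this
        have hr0 : r = 0 := le_antisymm this (norm_nonneg _)
        rw [← sub_eq_zero]
        exact norm_eq_zero.mp hr0
    have hTq : T q = q := by
      apply smul_right_injective X (ne_of_gt hlam0)
      have h1 : (1 - lam) • q + lam • T q = q := by
        simpa only [hSdef] using hSq
      have h2 : lam • T q - lam • q = ((1 - lam) • q + lam • T q) - q := by module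
      rw [h1, sub_self] at h2
      exact sub_eq_zero.mp h2
    exact ⟨q, hTq, hq⟩
  -- construct the fixed point via the iteration from 0
  have hiter : ∀ n : ℕ, S^[n + 1] (0 : X) = S (S^[n] 0) := fun n =>
    Function.iterate_succ_apply' S n 0
  obtain ⟨p, hTp, -⟩ := key (fun n => S^[n] (0 : X)) hiter
  have hSfix : ∀ x : X, T x = x → S x = x := by
    intro x hx
    simp only [hSdef, hx]
    module
  have huniq : ∀ q : X, T q = q → q = p := by
    intro q hq
    by_contra hne
    have h1 := hS q p hne
    rw [hSfix q hq, hSfix p hTp, norm_sub_rev p q] at h1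
    have := h6 (‖q - p‖) (norm_nonneg _) h1
    exact hne (sub_eq_zero.mp (norm_eq_zero.mp this))
  refine ⟨p, ⟨hTp, huniq⟩, lam, hlam0, hlam1, ?_⟩
  intro u hu
  obtain ⟨q, hTq, hq⟩ := key u (by intro n; rw [hu n])
  rwa [huniq q hTq] at hq
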